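/- For every k ≥ 1 the PMM iterates satisfy d−Cv_k ∈ ∂h2(x_k) and −Mu_k ∈ ∂h1(y_k), where x_k = z_{k-1}+λw_{k-1}+λ(Cv_k−d) and y_k = x_k−λ(w_{k-1}−Mu_k); equivalently x_k = (I+λ∂h2)^{-1}(z_{k-1}+λw_{k-1}) and y_k = (I+λ∂h1)^{-1}(x_k−λw_{k-1}). -/

import Mathlib

open scoped RealInnerProductSpace

noncomputable section

/-- `w` is a subgradient of the extended-real-valued function `φ` at `x`. -/
def HasSubgrad {E : Type*} [NormedAddCommGroup E] [InnerProductSpace ℝ E]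
    (φ : E → EReal) (w x : E) : Prop :=
  ∀ x' : E, φ x + ((⟪w, x' - x⟫ : ℝ) : EReal) ≤ φ x'

/-- `w` is an `ε`-subgradient of `φ` at `x`. -/
def HasESubgrad {E : Type*} [NormedAddCommGroup E] [InnerProductSpace ℝ E]
    (φ : E → EReal) (ε : ℝ) (w x : E) : Prop :=
  ∀ x' : E, φ x + ((⟪w, x' - x⟫ : ℝ) : EReal) - (ε : EReal) ≤ φ x'

/-- Convexity for an extended-real-valued function. -/
def ConvexE {E : Type*} [NormedAddCommGroup E] [InnerProductSpace ℝ E]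
    (φ : E → EReal) : Prop :=
  ∀ x y : E, ∀ a b : ℝ, 0 ≤ a → 0 ≤ b → a + b = 1 →
    φ (a • x + b • y) ≤ (a : EReal) * φ x + (b : EReal) * φ y

/-- Proper closed convex function with values in `(-∞, ∞]`. -/
def IsPCC {E : Type*} [NormedAddCommGroup E] [InnerProductSpace ℝ E]
    (φ : E → EReal) : Prop :=
  (∀ x, φ x ≠ ⊥) ∧ (∃ x, φ x ≠ ⊤) ∧ LowerSemicontinuous φ ∧ ConvexE φ

/-- Fenchel conjugate. -/
def fconj {E : Type*} [NormedAddCommGroup E] [InnerProductSpace ℝ E]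
    (φ : E → EReal) (w : E) : EReal :=
  ⨆ x : E, ((⟪w, x⟫ : ℝ) : EReal) - φ x

/-- Lagrangian of `min { f u + g v : M u + C v = d }`. -/
def Lag {E₁ E₂ F : Type*} [NormedAddCommGroup E₁] [InnerProductSpace ℝ E₁]
    [NormedAddCommGroup E₂] [InnerProductSpace ℝ E₂]
    [NormedAddCommGroup F] [InnerProductSpace ℝ F]
    (f : E₁ → EReal) (g : E₂ → EReal) (M : E₁ →ₗ[ℝ] F) (C : E₂ →ₗ[ℝ] F) (d : F)
    (u : E₁) (v : E₂) (z : F) : EReal :=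
  f u + g v + ((⟪M u + C v - d, z⟫ : ℝ) : EReal)

/-- Saddle point of the Lagrangian. -/
def IsSaddle {E₁ E₂ F : Type*} [NormedAddCommGroup E₁] [InnerProductSpace ℝ E₁]
    [NormedAddCommGroup E₂] [InnerProductSpace ℝ E₂]
    [NormedAddCommGroup F] [InnerProductSpace ℝ F]
    (f : E₁ → EReal) (g : E₂ → EReal) (M : E₁ →ₗ[ℝ] F) (C : E₂ →ₗ[ℝ] F) (d : F)
    (us : E₁) (vs : E₂) (zs : F) : Prop :=
  Lag f g M C d us vs zs ≠ ⊤ ∧ Lag f g M C d us vs zs ≠ ⊥ ∧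
  (∀ u v, Lag f g M C d us vs zs ≤ Lag f g M C d u v zs) ∧
  (∀ ζ, Lag f g M C d us vs ζ ≤ Lag f g M C d us vs zs)

/-- `h₁(z) = f*(-M* z)`. -/
def hOne {E₁ F : Type*} [NormedAddCommGroup E₁] [InnerProductSpace ℝ E₁]
    [FiniteDimensional ℝ E₁] [NormedAddCommGroup F] [InnerProductSpace ℝ F]
    [FiniteDimensional ℝ F] (f : E₁ → EReal) (M : E₁ →ₗ[ℝ] F) (z : F) : EReal :=
  fconj f (-(LinearMap.adjoint M z))

/-- `h₂(z) = g*(-C* z) + ⟪d, z⟫`. -/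
def hTwo {E₂ F : Type*} [NormedAddCommGroup E₂] [InnerProductSpace ℝ E₂]
    [FiniteDimensional ℝ E₂] [NormedAddCommGroup F] [InnerProductSpace ℝ F]
    [FiniteDimensional ℝ F] (g : E₂ → EReal) (C : E₂ →ₗ[ℝ] F) (d : F) (z : F) : EReal :=
  fconj g (-(LinearMap.adjoint C z)) + ((⟪d, z⟫ : ℝ) : EReal)

/-- The extended solution set `S_e(∂h₁, ∂h₂)`. -/
def extSolSet {E₁ E₂ F : Type*} [NormedAddCommGroup E₁] [InnerProductSpace ℝ E₁]
    [FiniteDimensional ℝ E₁] [NormedAddCommGroup E₂] [InnerProductSpace ℝ E₂]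
    [FiniteDimensional ℝ E₂] [NormedAddCommGroup F] [InnerProductSpace ℝ F]
    [FiniteDimensional ℝ F]
    (f : E₁ → EReal) (g : E₂ → EReal) (M : E₁ →ₗ[ℝ] F) (C : E₂ →ₗ[ℝ] F) (d : F) :
    Set (F × F) :=
  {p | HasSubgrad (hOne f M) (-p.2) p.1 ∧ HasSubgrad (hTwo g C d) p.2 p.1}


/-- If `a ≤ b + K t` for all small positive `t`, then `a ≤ b`. -/
lemma aux_limit {a b K : ℝ} (hK : 0 ≤ K) (h : ∀ t : ℝ, 0 < t → t ≤ 1 → a ≤ b + K * t) :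
    a ≤ b := by
  by_contra h'
  push_neg at h'
  set q : ℝ := (a - b) / (2 * (K + 1)) with hq
  have hqpos : 0 < q := div_pos (by linarith) (by positivity)
  have hqmul : q * (2 * (K + 1)) = a - b := div_mul_cancel₀ _ (by positivity)
  have h1 := h (min 1 q) (lt_min one_pos hqpos) (min_le_left _ _)
  have h2 : K * min 1 q ≤ K * q := mul_le_mul_of_nonneg_left (min_le_right _ _) hK
  nlinarith [h1, h2, hqpos, hK]

/-- The main computation: a minimizer of the augmented-Lagrangian subproblem yields a
subgradient of `hTwo`. -/
lemma subgrad_of_min {E F : Type*} [NormedAddCommGroup E] [InnerProductSpace ℝ E]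
    [FiniteDimensional ℝ E] [NormedAddCommGroup F] [InnerProductSpace ℝ F]
    [FiniteDimensional ℝ F]
    (g : E → EReal) (hbot : ∀ x, g x ≠ ⊥) (htop : ∃ x, g x ≠ ⊤) (hconv : ConvexE g)
    (C : E →ₗ[ℝ] F) (d a : F) (lam : ℝ) (hlam : 0 < lam) (vk : E)
    (hvk : ∀ v' : E, g vk + ((⟪a, C vk - d⟫ + lam / 2 * ‖C vk - d‖ ^ 2 : ℝ) : EReal) ≤
        g v' + ((⟪a, C v' - d⟫ + lam / 2 * ‖C v' - d‖ ^ 2 : ℝ) : EReal)) :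
    HasSubgrad (hTwo g C d) (d - C vk) (a + lam • (C vk - d)) := by
  obtain ⟨v0, hv0⟩ := htop
  have hgvk_top : g vk ≠ ⊤ := by
    intro htopk
    have h1 := hvk v0
    rw [htopk, EReal.top_add_coe] at h1
    exact absurd (top_le_iff.mp h1)
      (EReal.add_lt_top hv0 (EReal.coe_ne_top _)).ne
  set rk : ℝ := (g vk).toReal with hrkdef
  have hrk : g vk = (rk : EReal) := (EReal.coe_toReal hgvk_top (hbot vk)).symm
  set x : F := a + lam • (C vk - d) with hx
  set p : F := C vk - d with hp
  have key : ∀ (v' : E) (r' : ℝ), g v' = (r' : EReal) → rk ≤ r' + ⟪x, C v' - C vk⟫ := by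
    intro v' r' hr'
    set w : F := C v' - C vk with hw
    apply aux_limit (K := lam / 2 * ‖w‖ ^ 2) (by positivity)
    intro t ht0 ht1
    have hvt := hvk ((1 - t) • vk + t • v')
    have hcv := hconv vk v' (1 - t) t (by linarith) ht0.le (by ring)
    rw [hrk, hr'] at hcv
    have hcv' : g ((1 - t) • vk + t • v') ≤ (((1 - t) * rk + t * r' : ℝ) : EReal) := by
      refine hcv.trans_eq ?_
      rw [EReal.coe_add, EReal.coe_mul, EReal.coe_mul]
    have hchain :
        ((rk + (⟪a, p⟫ + lam / 2 * ‖p‖ ^ 2) : ℝ) : EReal) ≤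
          (((1 - t) * rk + t * r' +
            (⟪a, C ((1 - t) • vk + t • v') - d⟫ +
              lam / 2 * ‖C ((1 - t) • vk + t • v') - d‖ ^ 2) : ℝ) : EReal) := by
      rw [EReal.coe_add, EReal.coe_add ((1 - t) * rk + t * r'), ← hrk]
      exact hvt.trans (add_le_add_left hcv' _)
    rw [EReal.coe_le_coe_iff] at hchain
    have hvt_eq : C ((1 - t) • vk + t • v') - d = p + t • w := by
      simp only [map_add, map_smul, hp, hw]
      module
    rw [hvt_eq] at hchain
    have hnorm : ‖p + t • w‖ ^ 2 = ‖p‖ ^ 2 + 2 * (t * ⟪p, w⟫) + t ^ 2 * ‖w‖ ^ 2 := by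
      rw [norm_add_sq_real, real_inner_smul_right, norm_smul, Real.norm_eq_abs,
        abs_of_pos ht0]
      ring
    have hinner : ⟪a, p + t • w⟫ = ⟪a, p⟫ + t * ⟪a, w⟫ := by
      rw [inner_add_right, real_inner_smul_right]
    rw [hnorm, hinner] at hchain
    have hxw : ⟪x, w⟫ = ⟪a, w⟫ + lam * ⟪p, w⟫ := by
      rw [hx, inner_add_left, real_inner_smul_left]
    rw [hxw]
    have h4 : t * rk ≤ t * (r' + (⟪a, w⟫ + lam * ⟪p, w⟫) + lam / 2 * ‖w‖ ^ 2 * t) := by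
      nlinarith [hchain]
    have h5 := le_of_mul_le_mul_left h4 ht0
    linarith
  have hadj : ∀ (z : F) (v : E), ⟪-(LinearMap.adjoint C z), v⟫ = -⟪z, C v⟫ := by
    intro z v
    rw [inner_neg_left, LinearMap.adjoint_inner_left]
  have hconj_x : fconj g (-(LinearMap.adjoint C x)) = ((-⟪x, C vk⟫ - rk : ℝ) : EReal) := by
    apply le_antisymm
    · apply iSup_le
      intro v
      rcases eq_or_ne (g v) ⊤ with hv | hv
      · rw [hv, EReal.sub_top]; exact bot_le
      · have hv' : g v = (((g v).toReal : ℝ) : EReal) := (EReal.coe_toReal hv (hbot v)).symm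
        rw [hadj x v, hv', ← EReal.coe_sub, EReal.coe_le_coe_iff]
        have hk := key v (g v).toReal hv'
        have hsub : ⟪x, C v - C vk⟫ = ⟪x, C v⟫ - ⟪x, C vk⟫ := inner_sub_right x _ _
        linarith [hk, hsub.le, hsub.ge]
    · refine le_trans ?_
        (le_iSup (fun v => ((⟪-(LinearMap.adjoint C x), v⟫ : ℝ) : EReal) - g v) vk)
      rw [hadj x vk, hrk, ← EReal.coe_sub]
  intro z'
  show hTwo g C d x + _ ≤ hTwo g C d z'
  rw [hTwo, hTwo, hconj_x]
  have hRHS : ((-⟪z', C vk⟫ - rk + ⟪d, z'⟫ : ℝ) : EReal) ≤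
      fconj g (-(LinearMap.adjoint C z')) + ((⟪d, z'⟫ : ℝ) : EReal) := by
    rw [EReal.coe_add]
    refine add_le_add_left ?_ _
    refine le_trans ?_
      (le_iSup (fun v => ((⟪-(LinearMap.adjoint C z'), v⟫ : ℝ) : EReal) - g v) vk)
    rw [hadj z' vk, hrk, ← EReal.coe_sub]
  refine le_trans ?_ hRHS
  rw [← EReal.coe_add, ← EReal.coe_add, EReal.coe_le_coe_iff]
  have hexp : ⟪d - C vk, z' - x⟫ = ⟪d, z'⟫ - ⟪d, x⟫ - ⟪C vk, z'⟫ + ⟪C vk, x⟫ := by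
    rw [inner_sub_left, inner_sub_right, inner_sub_right]; ring
  rw [hexp, real_inner_comm (C vk) z', real_inner_comm (C vk) x]
  linarith

/-- the PMM iterates satisfy `d - Cv_k ∈ ∂h₂(x_k)` and `-Mu_k ∈ ∂h₁(y_k)`,
where `x_k = z_{k-1} + λw_{k-1} + λ(Cv_k - d)` and `y_k = x_k - λ(w_{k-1} - Mu_k)`;
equivalently `x_k = (I + λ∂h₂)⁻¹(z_{k-1} + λw_{k-1})` and
`y_k = (I + λ∂h₁)⁻¹(x_k - λw_{k-1})`. -/
theorem pmm_resolvent_inclusions (m1 m2 n : ℕ)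
    (f : EuclideanSpace ℝ (Fin m1) → EReal) (g : EuclideanSpace ℝ (Fin m2) → EReal)
    (hf : IsPCC f) (hg : IsPCC g)
    (M : EuclideanSpace ℝ (Fin m1) →ₗ[ℝ] EuclideanSpace ℝ (Fin n))
    (C : EuclideanSpace ℝ (Fin m2) →ₗ[ℝ] EuclideanSpace ℝ (Fin n))
    (d : EuclideanSpace ℝ (Fin n))
    (hA2 : (intrinsicInterior ℝ {w : EuclideanSpace ℝ (Fin m1) | fconj f w < ⊤} ∩
      Set.range (LinearMap.adjoint M)).Nonempty)
    (hA3 : (intrinsicInterior ℝ {w : EuclideanSpace ℝ (Fin m2) | fconj g w < ⊤} ∩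
      Set.range (LinearMap.adjoint C)).Nonempty)
    (lam : ℝ) (hlam : 0 < lam)
    (zp wp : EuclideanSpace ℝ (Fin n))
    (vk : EuclideanSpace ℝ (Fin m2)) (uk : EuclideanSpace ℝ (Fin m1))
    (hvk : ∀ v' : EuclideanSpace ℝ (Fin m2),
      g vk + ((⟪zp + lam • wp, C vk - d⟫ + lam / 2 * ‖C vk - d‖ ^ 2 : ℝ) : EReal) ≤
        g v' + ((⟪zp + lam • wp, C v' - d⟫ + lam / 2 * ‖C v' - d‖ ^ 2 : ℝ) : EReal))
    (huk : ∀ u' : EuclideanSpace ℝ (Fin m1),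
      f uk + ((⟪zp + lam • (C vk - d), M uk⟫ + lam / 2 * ‖M uk‖ ^ 2 : ℝ) : EReal) ≤
        f u' + ((⟪zp + lam • (C vk - d), M u'⟫ + lam / 2 * ‖M u'‖ ^ 2 : ℝ) : EReal))
    (xk yk : EuclideanSpace ℝ (Fin n))
    (hxk : xk = zp + lam • wp + lam • (C vk - d))
    (hyk : yk = xk - lam • (wp - M uk)) :
    HasSubgrad (hTwo g C d) (d - C vk) xk ∧
    HasSubgrad (hOne f M) (-(M uk)) yk ∧
    xk + lam • (d - C vk) = zp + lam • wp ∧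
    yk + lam • (-(M uk)) = xk - lam • wp := by
  
  have h2 := subgrad_of_min g hg.1 hg.2.1 hg.2.2.2 C d (zp + lam • wp) lam hlam vk hvk
  have hOne_eq : hOne f M = hTwo f M 0 := by
    funext z
    simp [hOne, hTwo]
  have huk' : ∀ u' : EuclideanSpace ℝ (Fin m1),
      f uk + ((⟪zp + lam • (C vk - d), M uk - 0⟫ + lam / 2 * ‖M uk - 0‖ ^ 2 : ℝ) : EReal) ≤
        f u' + ((⟪zp + lam • (C vk - d), M u' - 0⟫ + lam / 2 * ‖M u' - 0‖ ^ 2 : ℝ) : EReal) := by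
    simpa using huk
  have h1 := subgrad_of_min f hf.1 hf.2.1 hf.2.2.2 M 0 (zp + lam • (C vk - d)) lam hlam uk huk'
  have hyk' : yk = zp + lam • (C vk - d) + lam • (M uk - 0) := by
    rw [hyk, hxk]; module
  refine ⟨by rw [hxk]; exact h2, ?_, by rw [hxk]; module, by rw [hyk]; module⟩
  rw [hOne_eq, hyk']
  simpa using h1
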